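/- arXiv:1704.01265 — 2 statements merged into one kernel-verified Lean document; each statement's English description precedes it below -/
import Mathlib

section
/- Let W = [Uᵀ Vᵀ]ᵀ ∈ ℝ^{(p+q)×r} satisfy the balance condition UᵀU = VᵀV, and let Ŵ = [Uᵀ −Vᵀ]ᵀ. Then for every D = [D_Uᵀ D_Vᵀ]ᵀ ∈ ℝ^{(p+q)×r}, the on-diagonal and off-diagonal blocks of D Wᵀ have equal Frobenius energy: ‖D_U Uᵀ‖_F² + ‖D_V Vᵀ‖_F² = ‖D_U Vᵀ‖_F² + ‖D_V Uᵀ‖_F². -/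
open Matrix

noncomputable def singularValues {m n : Type*} [Fintype m] [Fintype n] [DecidableEq n]
    (X : Matrix m n ℝ) : n → ℝ :=
  fun i => Real.sqrt ((show (Xᵀ * X).IsHermitian by
    simpa [Matrix.conjTranspose_eq_transpose_of_trivial] using
      Matrix.isHermitian_conjTranspose_mul_self X).eigenvalues i)

noncomputable def nuclearNorm {m n : Type*} [Fintype m] [Fintype n] [DecidableEq n]
    (X : Matrix m n ℝ) : ℝ := ∑ i, singularValues X i

noncomputable def frobNorm {m n : Type*} [Fintype m] [Fintype n] (X : Matrix m n ℝ) : ℝ :=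
  Real.sqrt ((Xᵀ * X).trace)

noncomputable def matSpectralNorm {m n : Type*} [Fintype m] [Fintype n] [DecidableEq m] [DecidableEq n]
    (X : Matrix m n ℝ) : ℝ :=
  ‖LinearMap.toContinuousLinearMap (Matrix.toEuclideanLin X)‖

noncomputable def smallestNonzeroSV {m n : Type*} [Fintype m] [Fintype n] [DecidableEq n]
    (X : Matrix m n ℝ) : ℝ :=
  sInf {s | (∃ i, singularValues X i = s) ∧ s ≠ 0}

noncomputable def distO {n r : ℕ} (W₁ W₂ : Matrix (Fin n) (Fin r) ℝ) : ℝ :=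
  sInf {d | ∃ R : Matrix (Fin r) (Fin r) ℝ, Rᵀ * R = 1 ∧ d = frobNorm (W₁ - W₂ * R)}

lemma frob_sq {m n : Type*} [Fintype m] [Fintype n] (X : Matrix m n ℝ) :
    frobNorm X ^ 2 = (Xᵀ * X).trace := by
  have h : (0:ℝ) ≤ (Xᵀ * X).trace := by
    simp only [Matrix.trace, Matrix.diag, Matrix.mul_apply, Matrix.transpose_apply]
    exact Finset.sum_nonneg fun i _ => Finset.sum_nonneg fun j _ => mul_self_nonneg _
  exact Real.sq_sqrt h

theorem stmt3 {p q r : ℕ}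
    (U : Matrix (Fin p) (Fin r) ℝ) (V : Matrix (Fin q) (Fin r) ℝ)
    (hbal : Uᵀ * U = Vᵀ * V)
    (DU : Matrix (Fin p) (Fin r) ℝ) (DV : Matrix (Fin q) (Fin r) ℝ) :
    frobNorm (DU * Uᵀ) ^ 2 + frobNorm (DV * Vᵀ) ^ 2
      = frobNorm (DU * Vᵀ) ^ 2 + frobNorm (DV * Uᵀ) ^ 2 := by
  have key : ∀ {a b c : ℕ} (A : Matrix (Fin a) (Fin r) ℝ) (B : Matrix (Fin b) (Fin r) ℝ)
      (C : Matrix (Fin c) (Fin r) ℝ),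
      Bᵀ * B = Cᵀ * C → frobNorm (A * Bᵀ) ^ 2 = frobNorm (A * Cᵀ) ^ 2 := by
    intro a b c A B C h
    rw [frob_sq, frob_sq, Matrix.transpose_mul, Matrix.transpose_mul,
      Matrix.transpose_transpose, Matrix.transpose_transpose]
    have step : ∀ {a b : ℕ} (A : Matrix (Fin a) (Fin r) ℝ) (B : Matrix (Fin b) (Fin r) ℝ),
        (B * Aᵀ * (A * Bᵀ)).trace = (Aᵀ * A * (Bᵀ * B)).trace := by
      intro a b A B
      have e1 : (B * Aᵀ * (A * Bᵀ)).trace = (A * Bᵀ * (B * Aᵀ)).trace :=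
        Matrix.trace_mul_comm _ _
      have e2 : A * Bᵀ * (B * Aᵀ) = A * (Bᵀ * B) * Aᵀ := by
        rw [Matrix.mul_assoc, Matrix.mul_assoc, Matrix.mul_assoc]
      have e3 : (A * (Bᵀ * B) * Aᵀ).trace = (Aᵀ * (A * (Bᵀ * B))).trace :=
        Matrix.trace_mul_comm _ _
      rw [e1, e2, e3, ← Matrix.mul_assoc]
    rw [step, step, h]
  rw [key DU U V hbal, key DV V U hbal.symm]
end

section
/- Let W₁, W₂ ∈ ℝ^{n×r} with W₁ᵀW₂ = W₂ᵀW₁ positive semidefinite, and let Q be a matrix with orthonormal columns spanning the column space of W₁. Then ‖(W₁ − W₂)W₁ᵀ‖_F² ≤ (1/8)‖W₁W₁ᵀ − W₂W₂ᵀ‖_F² + (3 + 1/(2(√2 − 1))) ‖(W₁W₁ᵀ − W₂W₂ᵀ) Q Qᵀ‖_F². -/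
open Matrix

attribute [local instance] Matrix.normedAddCommGroup Matrix.normedSpace


namespace Stmt13Aux

variable {m n : Type*} [Fintype m] [Fintype n]

noncomputable def tsq (X : Matrix m n ℝ) : ℝ := (Xᵀ * X).trace

noncomputable def fip (X Y : Matrix m n ℝ) : ℝ := (Xᵀ * Y).trace

lemma fip_eq_sum (X Y : Matrix m n ℝ) :
    fip X Y = ∑ j : n, ∑ i : m, X i j * Y i j := by
  simp [fip, Matrix.trace, Matrix.diag, Matrix.mul_apply, Matrix.transpose_apply]

lemma tsq_eq_fip (X : Matrix m n ℝ) : tsq X = fip X X := rfl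

lemma tsq_nonneg (X : Matrix m n ℝ) : 0 ≤ tsq X := by
  rw [tsq_eq_fip, fip_eq_sum]
  apply Finset.sum_nonneg
  intro j _
  apply Finset.sum_nonneg
  intro i _
  exact mul_self_nonneg _

lemma fip_comm (X Y : Matrix m n ℝ) : fip X Y = fip Y X := by
  simp [fip_eq_sum, mul_comm]

lemma fip_cs (X Y : Matrix m n ℝ) :
    fip X Y ≤ Real.sqrt (tsq X) * Real.sqrt (tsq Y) := by
  rw [fip_eq_sum, tsq_eq_fip, tsq_eq_fip, fip_eq_sum, fip_eq_sum]
  have h1 : ∀ Z : Matrix m n ℝ, ∑ j : n, ∑ i : m, Z i j * Z i j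
      = ∑ p : n × m, (Z p.2 p.1) ^ 2 := by
    intro Z
    rw [← Finset.sum_product']
    simp [sq]
  rw [h1 X, h1 Y]
  have h2 : ∑ j : n, ∑ i : m, X i j * Y i j
      = ∑ p : n × m, X p.2 p.1 * Y p.2 p.1 := by
    rw [← Finset.sum_product']
    rfl
  rw [h2]
  exact Real.sum_mul_le_sqrt_mul_sqrt _ _ _

lemma tsq_add (X Y : Matrix m n ℝ) :
    tsq (X + Y) = tsq X + 2 * fip X Y + tsq Y := by
  have h : fip Y X = fip X Y := fip_comm Y X
  simp only [tsq, fip, transpose_add, Matrix.add_mul, Matrix.mul_add, Matrix.trace_add] at *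
  linarith

lemma tsq_transpose (X : Matrix m n ℝ) : tsq Xᵀ = tsq X := by
  simp only [tsq, transpose_transpose]
  exact Matrix.trace_mul_comm X Xᵀ

lemma tsq_neg (X : Matrix m n ℝ) : tsq (-X) = tsq X := by
  simp [tsq]

lemma sqrt_tsq_add (X Y : Matrix m n ℝ) :
    Real.sqrt (tsq (X + Y)) ≤ Real.sqrt (tsq X) + Real.sqrt (tsq Y) := by
  have h1 : tsq (X + Y) ≤ (Real.sqrt (tsq X) + Real.sqrt (tsq Y)) ^ 2 := by
    rw [tsq_add]
    have := fip_cs X Y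
    have hx := Real.sq_sqrt (tsq_nonneg X)
    have hy := Real.sq_sqrt (tsq_nonneg Y)
    nlinarith
  calc Real.sqrt (tsq (X + Y)) ≤ Real.sqrt ((Real.sqrt (tsq X) + Real.sqrt (tsq Y)) ^ 2) :=
        Real.sqrt_le_sqrt h1
    _ = Real.sqrt (tsq X) + Real.sqrt (tsq Y) := by
        rw [Real.sqrt_sq (by positivity)]

/-- Pythagoras for a symmetric idempotent acting on the left. -/
lemma pyth_left {P : Matrix m m ℝ} (hPt : Pᵀ = P) (hPP : P * P = P) (X : Matrix m n ℝ) :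
    tsq X = tsq (P * X) + tsq (X - P * X) := by
  have h0 : fip (P * X) (X - P * X) = 0 := by
    have : (P * X)ᵀ * (X - P * X) = 0 := by
      rw [transpose_mul, hPt, Matrix.mul_sub]
      rw [show Xᵀ * P * (P * X) = Xᵀ * (P * P) * X by
        rw [Matrix.mul_assoc, Matrix.mul_assoc, Matrix.mul_assoc]]
      rw [hPP, Matrix.mul_assoc]
      simp
    unfold fip
    rw [transpose_mul, hPt] at this ⊢
    rw [this, Matrix.trace_zero]
  have hX : P * X + (X - P * X) = X := by abel
  calc tsq X = tsq (P * X + (X - P * X)) := by rw [hX]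
    _ = tsq (P * X) + 2 * fip (P * X) (X - P * X) + tsq (X - P * X) := tsq_add _ _
    _ = tsq (P * X) + tsq (X - P * X) := by rw [h0]; ring

/-- Pythagoras for a symmetric idempotent acting on the right. -/
lemma pyth_right {P : Matrix n n ℝ} (hPt : Pᵀ = P) (hPP : P * P = P) (X : Matrix m n ℝ) :
    tsq X = tsq (X * P) + tsq (X - X * P) := by
  have h0 : fip (X * P) (X - X * P) = 0 := by
    unfold fip
    rw [transpose_mul, hPt, Matrix.mul_sub, Matrix.trace_sub]
    have : (P * Xᵀ * (X * P)).trace = (P * Xᵀ * X).trace := by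
      rw [show P * Xᵀ * (X * P) = (P * Xᵀ * X) * P by
        rw [Matrix.mul_assoc, Matrix.mul_assoc, Matrix.mul_assoc]]
      rw [Matrix.trace_mul_comm, ← Matrix.mul_assoc, ← Matrix.mul_assoc, hPP]
    rw [this]
    ring
  have hX : X * P + (X - X * P) = X := by abel
  calc tsq X = tsq (X * P + (X - X * P)) := by rw [hX]
    _ = tsq (X * P) + 2 * fip (X * P) (X - X * P) + tsq (X - X * P) := tsq_add _ _
    _ = tsq (X * P) + tsq (X - X * P) := by rw [h0]; ring

/-- `‖X Yᵀ‖_F² = tr((XᵀX)(YᵀY))`. -/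
lemma tsq_mul_transpose {p : Type*} [Fintype p] (X : Matrix m n ℝ) (Y : Matrix p n ℝ) :
    tsq (X * Yᵀ) = ((Xᵀ * X) * (Yᵀ * Y)).trace := by
  unfold tsq
  rw [transpose_mul, transpose_transpose]
  rw [show Y * Xᵀ * (X * Yᵀ) = Y * ((Xᵀ * X) * Yᵀ) by
    rw [Matrix.mul_assoc, Matrix.mul_assoc]]
  rw [Matrix.trace_mul_comm, Matrix.mul_assoc]

/-- trace of (Gram matrix * PSD matrix) is nonnegative. -/
lemma trace_gram_psd {q : Type*} [Fintype q] (X : Matrix m q ℝ) {C : Matrix q q ℝ}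
    (hC : C.PosSemidef) : 0 ≤ (Xᵀ * X * C).trace := by
  have h1 : (Xᵀ * X * C).trace = (X * C * Xᵀ).trace := by
    rw [Matrix.mul_assoc, Matrix.trace_mul_comm, Matrix.mul_assoc]
  rw [h1, Matrix.trace]
  apply Finset.sum_nonneg
  intro i _
  have h2 := hC.dotProduct_mulVec_nonneg (fun a => X i a)
  simp only [star, dotProduct, Matrix.mulVec, dotProduct, id_eq] at h2
  have key : Matrix.diag (X * C * Xᵀ) i = ∑ a, X i a * ∑ b, C a b * X i b := by
    simp only [Matrix.diag_apply, Matrix.mul_apply, Matrix.transpose_apply,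
      Finset.sum_mul, Finset.mul_sum]
    rw [Finset.sum_comm]
    apply Finset.sum_congr rfl
    intro a _
    apply Finset.sum_congr rfl
    intro b _
    ring
  rw [key]
  exact h2

lemma frob_sq (X : Matrix m n ℝ) : frobNorm X ^ 2 = tsq X :=
  Real.sq_sqrt (tsq_nonneg X)

end Stmt13Aux


open Stmt13Aux in
set_option maxHeartbeats 1000000 in
theorem stmt13 {n r k : ℕ} (W₁ W₂ : Matrix (Fin n) (Fin r) ℝ)
    (hsym : W₁ᵀ * W₂ = W₂ᵀ * W₁) (hpsd : (W₁ᵀ * W₂).PosSemidef)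
    (Q : Matrix (Fin n) (Fin k) ℝ) (hQ : Qᵀ * Q = 1)
    (hrange : LinearMap.range Q.mulVecLin = LinearMap.range W₁.mulVecLin) :
    frobNorm ((W₁ - W₂) * W₁ᵀ) ^ 2
      ≤ 1 / 8 * frobNorm (W₁ * W₁ᵀ - W₂ * W₂ᵀ) ^ 2
        + (3 + 1 / (2 * (Real.sqrt 2 - 1)))
          * frobNorm ((W₁ * W₁ᵀ - W₂ * W₂ᵀ) * (Q * Qᵀ)) ^ 2 := by
  classical

  set P : Matrix (Fin n) (Fin n) ℝ := Q * Qᵀ with hPdef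
  have hPt : Pᵀ = P := by rw [hPdef, transpose_mul, transpose_transpose]
  have hPQ : P * Q = Q := by rw [hPdef, Matrix.mul_assoc, hQ, Matrix.mul_one]
  have hPP : P * P = P := by
    rw [hPdef, ← Matrix.mul_assoc]
    rw [show Q * Qᵀ * Q = Q * (Qᵀ * Q) from Matrix.mul_assoc _ _ _, hQ, Matrix.mul_one]
  have hP : P * W₁ = W₁ := by
    have hmv : ∀ x : Fin r → ℝ, (P * W₁) *ᵥ x = W₁ *ᵥ x := by
      intro x
      have hx : W₁ *ᵥ x ∈ LinearMap.range W₁.mulVecLin :=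
        LinearMap.mem_range.mpr ⟨x, by simp⟩
      rw [← hrange] at hx
      obtain ⟨y, hy⟩ := hx
      have hy' : Q *ᵥ y = W₁ *ᵥ x := by simpa using hy
      rw [← Matrix.mulVec_mulVec, ← hy', Matrix.mulVec_mulVec, hPQ, hy']
    ext i j
    have h := congrFun (hmv (Pi.single j 1)) i
    simpa using h
  have hAtP : W₁ᵀ * P = W₁ᵀ := by
    have h := congrArg Matrix.transpose hP
    rw [transpose_mul, hPt] at h
    exact h
  -- right-associated rewrite helpers
  have hr1 : ∀ X : Matrix (Fin r) (Fin n) ℝ, P * (W₁ * X) = W₁ * X := fun X => by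
    rw [← Matrix.mul_assoc, hP]
  have hr1' : ∀ X : Matrix (Fin r) (Fin r) ℝ, P * (W₁ * X) = W₁ * X := fun X => by
    rw [← Matrix.mul_assoc, hP]
  have hr2 : ∀ X : Matrix (Fin n) (Fin n) ℝ, W₁ᵀ * (P * X) = W₁ᵀ * X := fun X => by
    rw [← Matrix.mul_assoc, hAtP]
  have hr3 : ∀ X : Matrix (Fin n) (Fin r) ℝ, W₁ᵀ * (P * X) = W₁ᵀ * X := fun X => by
    rw [← Matrix.mul_assoc, hAtP]
  have hr4 : ∀ X : Matrix (Fin n) (Fin r) ℝ, P * (P * X) = P * X := fun X => by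
    rw [← Matrix.mul_assoc, hPP]
  have hr5 : ∀ X : Matrix (Fin n) (Fin n) ℝ, P * (P * X) = P * X := fun X => by
    rw [← Matrix.mul_assoc, hPP]
  have hsymflip : W₂ᵀ * W₁ = W₁ᵀ * W₂ := hsym.symm
  set C : Matrix (Fin r) (Fin r) ℝ := W₁ᵀ * W₂ with hCdef
  set D : Matrix (Fin n) (Fin n) ℝ := W₁ * W₁ᵀ - W₂ * W₂ᵀ with hDdef
  set V : Matrix (Fin n) (Fin n) ℝ := (W₁ - W₂) * W₁ᵀ with hVdef
  set Bp : Matrix (Fin n) (Fin r) ℝ := P * W₂ with hBpdef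
  set Dt : Matrix (Fin n) (Fin r) ℝ := W₁ - Bp with hDtdef
  set St : Matrix (Fin n) (Fin r) ℝ := W₁ + Bp with hStdef
  set Mt : Matrix (Fin r) (Fin r) ℝ := W₁ᵀ * W₁ - W₂ᵀ * Bp with hMtdef
  set K : Matrix (Fin r) (Fin r) ℝ := W₂ᵀ * W₂ - W₂ᵀ * Bp with hKdef
  set Z : Matrix (Fin n) (Fin r) ℝ := Bp - W₂ with hZdef
  -- matrix identities
  have idPV : P * V = Dt * W₁ᵀ := by
    rw [hVdef, hDtdef, hBpdef, ← Matrix.mul_assoc, Matrix.mul_sub, hP]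
  have idE : V - P * V = Z * W₁ᵀ := by
    rw [idPV, hVdef, hDtdef, hZdef, hBpdef, ← Matrix.sub_mul]
    congr 1
    abel
  have id2A : Dt * Stᵀ + Dt * Dtᵀ = Dt * W₁ᵀ + Dt * W₁ᵀ := by
    rw [← Matrix.mul_add, ← Matrix.mul_add, hStdef, hDtdef, transpose_add, transpose_sub]
    congr 1
    abel
  have idSS : Stᵀ * St = Dtᵀ * Dt + (C + C + C + C) := by
    rw [hStdef, hDtdef, hBpdef, hCdef]
    simp only [Matrix.mul_add, Matrix.add_mul, Matrix.mul_sub, Matrix.sub_mul,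
      transpose_add, transpose_sub, transpose_mul, transpose_transpose,
      Matrix.mul_assoc, hPt, hP, hAtP, hr1, hr1', hr2, hr3, hr4, hr5, hsymflip]
    all_goals abel
  have idM1 : Dtᵀ * St = Mt := by
    rw [hStdef, hDtdef, hBpdef, hMtdef]
    simp only [Matrix.mul_add, Matrix.add_mul, Matrix.mul_sub, Matrix.sub_mul,
      transpose_add, transpose_sub, transpose_mul, transpose_transpose,
      Matrix.mul_assoc, hPt, hP, hAtP, hr1, hr1', hr2, hr3, hr4, hr5, hsymflip]
    all_goals abel
  have idMsym : Mtᵀ = Mt := by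
    rw [hMtdef, hBpdef]
    simp only [transpose_sub, transpose_mul, transpose_transpose, Matrix.mul_assoc, hPt]
  have idPDP2 : Dt * Stᵀ + St * Dtᵀ = P * (D * P) + P * (D * P) := by
    rw [hStdef, hDtdef, hBpdef, hDdef]
    simp only [Matrix.mul_add, Matrix.add_mul, Matrix.mul_sub, Matrix.sub_mul,
      transpose_add, transpose_sub, transpose_mul, transpose_transpose,
      Matrix.mul_assoc, hPt, hP, hAtP, hr1, hr1', hr2, hr3, hr4, hr5, hsymflip]
    all_goals abel
  have idZ : Zᵀ * Z = K := by
    rw [hZdef, hBpdef, hKdef]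
    simp only [Matrix.mul_add, Matrix.add_mul, Matrix.mul_sub, Matrix.sub_mul,
      transpose_add, transpose_sub, transpose_mul, transpose_transpose,
      Matrix.mul_assoc, hPt, hP, hAtP, hr1, hr1', hr2, hr3, hr4, hr5, hsymflip]
    all_goals abel
  have idKsym : Kᵀ = K := by
    rw [hKdef, hBpdef]
    simp only [transpose_sub, transpose_mul, transpose_transpose, Matrix.mul_assoc, hPt]
  have idGA : W₁ᵀ * W₁ = Mt + W₂ᵀ * Bp := by
    rw [hMtdef]
    abel
  have idBpBp : Bpᵀ * Bp = W₂ᵀ * Bp := by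
    rw [hBpdef]
    simp only [transpose_mul, Matrix.mul_assoc, hPt, hr4]
  have idR : D * P - P * (D * P) = Z * Bpᵀ := by
    rw [hZdef, hBpdef, hDdef]
    simp only [Matrix.mul_add, Matrix.add_mul, Matrix.mul_sub, Matrix.sub_mul,
      transpose_add, transpose_sub, transpose_mul, transpose_transpose,
      Matrix.mul_assoc, hPt, hP, hAtP, hr1, hr1', hr2, hr3, hr4, hr5, hsymflip]
    all_goals abel
  have idRt : P * (D - D * P) = (D * P - P * (D * P))ᵀ := by
    rw [hDdef]
    simp only [Matrix.mul_add, Matrix.add_mul, Matrix.mul_sub, Matrix.sub_mul,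
      transpose_add, transpose_sub, transpose_mul, transpose_transpose,
      Matrix.mul_assoc, hPt, hP, hAtP, hr1, hr1', hr2, hr3, hr4, hr5, hsymflip]
    all_goals abel
  have idOut : (D - D * P) - P * (D - D * P) = -(Z * Zᵀ) := by
    rw [hZdef, hBpdef, hDdef]
    simp only [Matrix.mul_add, Matrix.add_mul, Matrix.mul_sub, Matrix.sub_mul,
      transpose_add, transpose_sub, transpose_mul, transpose_transpose, neg_sub,
      Matrix.mul_assoc, hPt, hP, hAtP, hr1, hr1', hr2, hr3, hr4, hr5, hsymflip]
    all_goals abel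
  -- scalar quantities
  -- a2 = tsq V, f2 = tsq (P*V), e2 = tsq (V - P*V), u2 = tsq (Dt*Stᵀ), v2 = tsq Mt
  -- pi2 = tsq (P*(D*P)), w2 = tsq (D*P - P*(D*P)), k2 = tsq K, p2 = tsq (D*P), d2 = tsq D
  have sPyth : tsq V = tsq (P * V) + tsq (V - P * V) := pyth_left hPt hPP V
  -- f2 ≤ u2
  have hGram0 : (0:ℝ) ≤ ((Dtᵀ * Dt) * C).trace := by
    rw [hCdef]
    exact trace_gram_psd Dt hpsd
  have hu2 : tsq (Dt * Stᵀ) = ((Dtᵀ * Dt) * (Dtᵀ * Dt)).trace + 4 * ((Dtᵀ * Dt) * C).trace := by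
    rw [tsq_mul_transpose Dt St, idSS]
    simp only [Matrix.mul_add, Matrix.trace_add]
    ring
  have ht2 : tsq (Dt * Dtᵀ) = ((Dtᵀ * Dt) * (Dtᵀ * Dt)).trace := tsq_mul_transpose Dt Dt
  have hDDle : tsq (Dt * Dtᵀ) ≤ tsq (Dt * Stᵀ) := by rw [hu2, ht2]; linarith
  have hf2u2 : tsq (Dt * W₁ᵀ) ≤ tsq (Dt * Stᵀ) := by
    have h4 : tsq (Dt * W₁ᵀ + Dt * W₁ᵀ) = 4 * tsq (Dt * W₁ᵀ) := by
      rw [tsq_add, ← tsq_eq_fip]; ring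
    have h4' : tsq (Dt * Stᵀ + Dt * Dtᵀ)
        = tsq (Dt * Stᵀ) + 2 * fip (Dt * Stᵀ) (Dt * Dtᵀ) + tsq (Dt * Dtᵀ) :=
      tsq_add _ _
    have hcs := fip_cs (Dt * Stᵀ) (Dt * Dtᵀ)
    have hsle : Real.sqrt (tsq (Dt * Dtᵀ)) ≤ Real.sqrt (tsq (Dt * Stᵀ)) :=
      Real.sqrt_le_sqrt hDDle
    have hm1 : Real.sqrt (tsq (Dt * Stᵀ)) * Real.sqrt (tsq (Dt * Dtᵀ))
        ≤ Real.sqrt (tsq (Dt * Stᵀ)) * Real.sqrt (tsq (Dt * Stᵀ)) :=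
      mul_le_mul_of_nonneg_left hsle (Real.sqrt_nonneg _)
    have hm2 : Real.sqrt (tsq (Dt * Stᵀ)) * Real.sqrt (tsq (Dt * Stᵀ)) = tsq (Dt * Stᵀ) :=
      Real.mul_self_sqrt (tsq_nonneg _)
    have heq : tsq (Dt * Stᵀ + Dt * Dtᵀ) = 4 * tsq (Dt * W₁ᵀ) := by rw [id2A, h4]
    linarith
  -- u2 + v2 = 2 pi2
  have hTsp : tsq (St * Dtᵀ) = tsq (Dt * Stᵀ) := by
    rw [show St * Dtᵀ = (Dt * Stᵀ)ᵀ by rw [transpose_mul, transpose_transpose]]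
    exact tsq_transpose _
  have hFipM : fip (Dt * Stᵀ) (St * Dtᵀ) = tsq Mt := by
    unfold Stmt13Aux.fip
    rw [transpose_mul, transpose_transpose]
    calc (St * Dtᵀ * (St * Dtᵀ)).trace
        = (St * (Dtᵀ * (St * Dtᵀ))).trace := by rw [Matrix.mul_assoc]
      _ = ((Dtᵀ * (St * Dtᵀ)) * St).trace := Matrix.trace_mul_comm _ _
      _ = ((Dtᵀ * St) * (Dtᵀ * St)).trace := by
          rw [Matrix.mul_assoc, Matrix.mul_assoc, Matrix.mul_assoc]
      _ = (Mt * Mt).trace := by rw [idM1]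
      _ = (Mtᵀ * Mt).trace := by rw [idMsym]
      _ = tsq Mt := rfl
  have hUV : tsq (Dt * Stᵀ) + tsq Mt = 2 * tsq (P * (D * P)) := by
    have h1 : tsq (Dt * Stᵀ + St * Dtᵀ)
        = tsq (Dt * Stᵀ) + 2 * fip (Dt * Stᵀ) (St * Dtᵀ) + tsq (St * Dtᵀ) := tsq_add _ _
    have h2 : tsq (P * (D * P) + P * (D * P)) = 4 * tsq (P * (D * P)) := by
      rw [tsq_add, ← tsq_eq_fip]; ring
    rw [idPDP2, h2] at h1
    rw [hTsp, hFipM] at h1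
    linarith
  -- e2 = (K*Mt).trace + w2
  have hE : tsq (V - P * V) = (K * Mt).trace + (K * (W₂ᵀ * Bp)).trace := by
    rw [idE, tsq_mul_transpose Z W₁, idZ, idGA, Matrix.mul_add, Matrix.trace_add]
  have hW : tsq (D * P - P * (D * P)) = (K * (W₂ᵀ * Bp)).trace := by
    rw [idR, tsq_mul_transpose Z Bp, idZ, idBpBp]
  -- (K*Mt).trace ≤ √k2 √v2
  have hKM : (K * Mt).trace ≤ Real.sqrt (tsq K) * Real.sqrt (tsq Mt) := by
    have : (K * Mt).trace = fip K Mt := by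
      unfold Stmt13Aux.fip
      rw [idKsym]
    rw [this]
    exact fip_cs K Mt
  -- d2 decomposition
  have hD1 : tsq D = tsq (D * P) + tsq (D - D * P) := pyth_right hPt hPP D
  have hD2 : tsq (D - D * P)
      = tsq (P * (D - D * P)) + tsq ((D - D * P) - P * (D - D * P)) := pyth_left hPt hPP _
  have hD3 : tsq (P * (D - D * P)) = tsq (D * P - P * (D * P)) := by
    rw [idRt]
    exact tsq_transpose _
  have hD4 : tsq ((D - D * P) - P * (D - D * P)) = tsq K := by
    rw [idOut, tsq_neg, tsq_mul_transpose Z Z, idZ]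
    show (K * K).trace = tsq K
    unfold Stmt13Aux.tsq
    rw [idKsym]
  have hP1 : tsq (D * P) = tsq (P * (D * P)) + tsq (D * P - P * (D * P)) :=
    pyth_left hPt hPP (D * P)
  -- final numeric assembly
  rw [Stmt13Aux.frob_sq, Stmt13Aux.frob_sq, Stmt13Aux.frob_sq]
  -- abbreviate scalars
  have a2nn := tsq_nonneg V
  have pi2nn := tsq_nonneg (P * (D * P))
  have w2nn := tsq_nonneg (D * P - P * (D * P))
  have k2nn := tsq_nonneg K
  have v2nn := tsq_nonneg Mt
  have u2nn := tsq_nonneg (Dt * Stᵀ)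
  have hAM : Real.sqrt (tsq K) * Real.sqrt (tsq Mt) ≤ tsq K / 8 + 2 * tsq Mt := by
    have h1 := Real.sq_sqrt k2nn
    have h2 := Real.sq_sqrt v2nn
    nlinarith [sq_nonneg (Real.sqrt (tsq K) - 4 * Real.sqrt (tsq Mt)),
      Real.sqrt_nonneg (tsq K), Real.sqrt_nonneg (tsq Mt)]
  have hc : (31:ℝ)/8 ≤ 3 + 1 / (2 * (Real.sqrt 2 - 1)) := by
    have hs2 : Real.sqrt 2 ^ 2 = 2 := Real.sq_sqrt (by norm_num)
    have hs0 : (0:ℝ) ≤ Real.sqrt 2 := Real.sqrt_nonneg 2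
    have h1 : (1:ℝ) < Real.sqrt 2 := by nlinarith
    have h7 : Real.sqrt 2 ≤ 11/7 := by nlinarith
    have hd : (0:ℝ) < 2 * (Real.sqrt 2 - 1) := by linarith
    have h78 : (7:ℝ)/8 ≤ 1 / (2 * (Real.sqrt 2 - 1)) := by
      rw [le_div_iff₀ hd]
      linarith
    linarith
  have hfP : tsq (P * V) = tsq (Dt * W₁ᵀ) := by rw [idPV]
  -- combine: tsq V ≤ 4 pi2 + w2 + k2/8
  have key : tsq V ≤ 4 * tsq (P * (D * P)) + tsq (D * P - P * (D * P)) + tsq K / 8 := by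
    have e1 : tsq (V - P * V) ≤ tsq K / 8 + 2 * tsq Mt + tsq (D * P - P * (D * P)) := by
      rw [hE, ← hW]
      linarith
    have e2 : tsq (P * V) ≤ 2 * tsq (P * (D * P)) - tsq Mt := by
      rw [hfP]
      linarith
    have e3 : tsq Mt ≤ 2 * tsq (P * (D * P)) := by linarith
    linarith
  -- conclude
  have hcpi : (31:ℝ)/8 * tsq (P * (D * P)) ≤ (3 + 1 / (2 * (Real.sqrt 2 - 1))) * tsq (P * (D * P)) :=
    mul_le_mul_of_nonneg_right hc pi2nn
  have hcw : (31:ℝ)/8 * tsq (D * P - P * (D * P))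
      ≤ (3 + 1 / (2 * (Real.sqrt 2 - 1))) * tsq (D * P - P * (D * P)) :=
    mul_le_mul_of_nonneg_right hc w2nn
  have hrhs : (3 + 1 / (2 * (Real.sqrt 2 - 1))) * tsq (D * P)
      = (3 + 1 / (2 * (Real.sqrt 2 - 1))) * tsq (P * (D * P))
        + (3 + 1 / (2 * (Real.sqrt 2 - 1))) * tsq (D * P - P * (D * P)) := by
    rw [hP1]; ring
  rw [hrhs]
  have hdd : tsq D = tsq (P * (D * P)) + 2 * tsq (D * P - P * (D * P)) + tsq K := by
    rw [hD1, hD2, hD3, hD4, hP1]; ring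
  rw [hdd]
  linarith
end
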